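/- For any k ≠ 0 and complex numbers b̂, ĉ, the solution ĥ(ψ) = [ĉ sinh(kψ) − b̂ sinh(k(ψ−1))]/sinh(k) of ĥ'' − k²ĥ = 0 with ĥ(0) = b̂, ĥ(1) = ĉ satisfies ‖D^p ĥ‖²_{L²(0,1)} ≤ C k^{2p−1}(|b̂|² + |ĉ|²) for every p ≥ 0, with C independent of k. -/

import Mathlib

/- STATEMENT 14: For k ≠ 0 and b̂, ĉ ∈ ℂ, the function
ĥ(ψ) = [ĉ sinh(kψ) − b̂ sinh(k(ψ−1))]/sinh(k) solves ĥ'' − k²ĥ = 0, ĥ(0) = b̂,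
ĥ(1) = ĉ, and satisfies ‖D^p ĥ‖²_{L²(0,1)} ≤ C k^{2p−1}(|b̂|² + |ĉ|²) for every
p ≥ 0, with C = C(p) independent of k. -/

/-- the homogeneous solution ĥ -/
noncomputable def hsol (k : ℤ) (b c : ℂ) (ψ : ℝ) : ℂ :=
  (c * Complex.sinh ((k:ℂ) * ψ) - b * Complex.sinh ((k:ℂ) * ((ψ:ℂ) - 1))) /
    Complex.sinh (k:ℂ)

/-- alternating sinh/cosh family: `auxF n` is `sinh` for even `n`, `cosh` for odd `n`. -/
noncomputable def auxF (n : ℕ) (x : ℂ) : ℂ :=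
  if Even n then Complex.sinh x else Complex.cosh x

lemma continuous_auxF (n : ℕ) : Continuous (auxF n) := by
  unfold auxF; split
  · exact Complex.continuous_sinh
  · exact Complex.continuous_cosh

lemma hasDerivAt_auxF (n : ℕ) (x : ℂ) : HasDerivAt (auxF n) (auxF (n+1) x) x := by
  rcases Nat.even_or_odd n with he | ho
  · have h1 : auxF n = Complex.sinh := by funext z; simp [auxF, he]
    have h2 : auxF (n+1) x = Complex.cosh x := by simp [auxF, Nat.even_add_one, he]
    rw [h1, h2]; exact Complex.hasDerivAt_sinh x
  · have h1 : auxF n = Complex.cosh := by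
      funext z; simp [auxF, Nat.not_even_iff_odd.mpr ho]
    have h2 : auxF (n+1) x = Complex.sinh x := by
      simp [auxF, Nat.even_add_one, Nat.not_even_iff_odd.mpr ho]
    rw [h1, h2]; exact Complex.hasDerivAt_cosh x

lemma hasDerivAt_auxF_comp (n : ℕ) (K a : ℂ) (ψ : ℝ) :
    HasDerivAt (fun t : ℝ => auxF n (K * ((t:ℂ) + a)))
      (K * auxF (n+1) (K * (((ψ:ℝ):ℂ) + a))) ψ := by
  have h1 : HasDerivAt (fun z : ℂ => K * (z + a)) K ((ψ:ℝ):ℂ) := by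
    simpa using ((hasDerivAt_id ((ψ:ℝ):ℂ)).add_const a).const_mul K
  have h2 := (hasDerivAt_auxF n (K * (((ψ:ℝ):ℂ) + a))).comp ((ψ:ℝ):ℂ) h1
  have h3 := h2.comp_ofReal
  simpa [Function.comp, mul_comm] using h3

lemma iteratedDeriv_hsol (k : ℤ) (b c : ℂ) (p : ℕ) :
    iteratedDeriv p (hsol k b c) = fun ψ : ℝ =>
      (c * (k:ℂ)^p * auxF p ((k:ℂ) * ψ) - b * (k:ℂ)^p * auxF p ((k:ℂ) * ((ψ:ℂ) - 1))) /
        Complex.sinh (k:ℂ) := by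
  induction p with
  | zero => funext ψ; simp [hsol, auxF]
  | succ n ih =>
    rw [iteratedDeriv_succ, ih]
    funext ψ
    have h1 : HasDerivAt (fun t : ℝ => auxF n ((k:ℂ) * (t:ℂ)))
        ((k:ℂ) * auxF (n+1) ((k:ℂ) * (ψ:ℂ))) ψ := by
      simpa using hasDerivAt_auxF_comp n (k:ℂ) 0 ψ
    have h2 : HasDerivAt (fun t : ℝ => auxF n ((k:ℂ) * ((t:ℂ) - 1)))
        ((k:ℂ) * auxF (n+1) ((k:ℂ) * ((ψ:ℂ) - 1))) ψ := by
      simpa [sub_eq_add_neg] using hasDerivAt_auxF_comp n (k:ℂ) (-1) ψ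
    have H := ((h1.const_mul (c * (k:ℂ)^n)).sub
        (h2.const_mul (b * (k:ℂ)^n))).div_const (Complex.sinh (k:ℂ))
    refine H.deriv.trans ?_
    ring

lemma norm_auxF_le (n : ℕ) (x : ℝ) : ‖auxF n ((x:ℂ))‖ ≤ Real.exp |x| := by
  have h1 : Real.exp x ≤ Real.exp |x| := Real.exp_le_exp.2 (le_abs_self x)
  have h2 : Real.exp (-x) ≤ Real.exp |x| := Real.exp_le_exp.2 (neg_le_abs x)
  have h3 : 0 < Real.exp (-x) := Real.exp_pos _
  have h4 : 0 < Real.exp x := Real.exp_pos _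
  unfold auxF; split
  · rw [← Complex.ofReal_sinh, Complex.norm_real, Real.norm_eq_abs, Real.sinh_eq]
    refine abs_le.2 ⟨by linarith, by linarith⟩
  · rw [← Complex.ofReal_cosh, Complex.norm_real, Real.norm_eq_abs, Real.cosh_eq]
    refine abs_le.2 ⟨by linarith, by linarith⟩

lemma exp_le_four_sinh {K : ℝ} (hK : 1 ≤ K) : Real.exp K ≤ 4 * Real.sinh K := by
  have h1 : Real.exp (-K) ≤ 1 := by
    rw [show (1:ℝ) = Real.exp 0 by simp]
    exact Real.exp_le_exp.2 (by linarith)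
  have h2 : (2:ℝ) ≤ Real.exp K := by
    have := Real.add_one_le_exp (1:ℝ)
    have := Real.exp_le_exp.2 hK
    linarith
  rw [Real.sinh_eq]
  linarith

lemma integral_exp_affine (a b0 : ℝ) (ha : a ≠ 0) :
    (∫ t in (0:ℝ)..1, Real.exp (a*t + b0)) = (Real.exp (a + b0) - Real.exp b0) / a := by
  have hd : ∀ t ∈ Set.uIcc (0:ℝ) 1,
      HasDerivAt (fun t : ℝ => Real.exp (a*t + b0) / a) (Real.exp (a*t + b0)) t := by
    intro t _
    have h1 : HasDerivAt (fun t : ℝ => a*t + b0) a t := by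
      simpa using ((hasDerivAt_id t).const_mul a).add_const b0
    have h2 := (Real.hasDerivAt_exp (a*t + b0)).comp t h1
    have h3 := h2.div_const a
    rw [mul_div_cancel_right₀ _ ha] at h3
    exact h3
  rw [intervalIntegral.integral_eq_sub_of_hasDerivAt hd
    ((Real.continuous_exp.comp (by continuity)).intervalIntegrable _ _)]
  rw [show a*(1:ℝ) + b0 = a + b0 by ring, show a*(0:ℝ) + b0 = b0 by ring]
  ring

set_option maxHeartbeats 1600000 in
theorem homogeneous_solution_estimates (p : ℕ) :
    ∃ C > (0:ℝ), ∀ k : ℤ, k ≠ 0 → ∀ b c : ℂ,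
      -- ĥ solves the boundary value problem
      hsol k b c 0 = b ∧ hsol k b c 1 = c ∧
      (∀ ψ : ℝ, deriv (deriv (hsol k b c)) ψ = (k:ℂ)^2 * hsol k b c ψ) ∧
      -- and satisfies the L² estimates on its derivatives
      (∫ t in (0:ℝ)..1, ‖iteratedDeriv p (hsol k b c) t‖^2) ≤
        C * ((|k| : ℤ) : ℝ) ^ (2*(p:ℤ) - 1) * (‖b‖^2 + ‖c‖^2) := by
  refine ⟨16, by norm_num, ?_⟩
  intro k hk b c
  set K : ℝ := ((|k| : ℤ) : ℝ) with hKdef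
  have hKabs : K = |(k:ℝ)| := by rw [hKdef]; push_cast; ring
  have hK1 : (1:ℝ) ≤ K := by
    rw [hKdef]
    exact_mod_cast Int.one_le_abs hk
  have hKpos : (0:ℝ) < K := lt_of_lt_of_le one_pos hK1
  have hsinh_pos : 0 < Real.sinh K := by
    have := exp_le_four_sinh hK1
    have := Real.exp_pos K
    linarith
  have hnormS : ‖Complex.sinh ((k:ℤ):ℂ)‖ = Real.sinh K := by
    rw [show ((k:ℤ):ℂ) = (((k:ℝ)):ℂ) by push_cast; ring, ← Complex.ofReal_sinh,
      Complex.norm_real, Real.norm_eq_abs, Real.abs_sinh, ← hKabs]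
  have hsC : Complex.sinh ((k:ℤ):ℂ) ≠ 0 := by
    intro h
    rw [h, norm_zero] at hnormS
    linarith
  -- boundary conditions
  have hb0 : hsol k b c 0 = b := by
    have h1 : hsol k b c 0 =
        (c * Complex.sinh 0 - b * Complex.sinh (-(k:ℂ))) / Complex.sinh (k:ℂ) := by
      unfold hsol; norm_num
    rw [h1, Complex.sinh_zero, Complex.sinh_neg]
    field_simp
    ring
  have hb1 : hsol k b c 1 = c := by
    have h1 : hsol k b c 1 =
        (c * Complex.sinh (k:ℂ) - b * Complex.sinh 0) / Complex.sinh (k:ℂ) := by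
      unfold hsol; norm_num
    rw [h1, Complex.sinh_zero]
    field_simp
    ring
  -- the ODE
  have hODE : ∀ ψ : ℝ, deriv (deriv (hsol k b c)) ψ = (k:ℂ)^2 * hsol k b c ψ := by
    intro ψ
    have h2 : deriv (deriv (hsol k b c)) = iteratedDeriv 2 (hsol k b c) := by
      rw [iteratedDeriv_succ, iteratedDeriv_one]
    rw [h2, iteratedDeriv_hsol k b c 2]
    unfold hsol
    simp only [auxF, show Even 2 from ⟨1, rfl⟩, if_true]
    ring
  refine ⟨hb0, hb1, hODE, ?_⟩
  -- pointwise bound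
  have key : ∀ t ∈ Set.Icc (0:ℝ) 1,
      ‖iteratedDeriv p (hsol k b c) t‖^2 ≤
        32 * K^(2*p) * (‖c‖^2 * Real.exp (2*K*t - 2*K) + ‖b‖^2 * Real.exp (-(2*K*t))) := by
    intro t ht
    simp only [iteratedDeriv_hsol k b c p]
    have e1 : ((k:ℂ) * (t:ℂ)) = (((k:ℝ)*t : ℝ) : ℂ) := by push_cast; ring
    have e2 : ((k:ℂ) * ((t:ℂ) - 1)) = (((k:ℝ)*(t-1) : ℝ) : ℂ) := by push_cast; ring
    have hkpow : ‖(k:ℂ)^p‖ = K^p := by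
      rw [norm_pow, Complex.norm_intCast, ← hKabs]
    have habs1 : |(k:ℝ)*t| = K*t := by
      rw [abs_mul, ← hKabs, abs_of_nonneg ht.1]
    have habs2 : |(k:ℝ)*(t-1)| = K*(1-t) := by
      rw [abs_mul, ← hKabs, abs_of_nonpos (by linarith [ht.2] : t - 1 ≤ 0)]
      ring
    have n1 : ‖auxF p ((k:ℂ)*(t:ℂ))‖ ≤ Real.exp (K*t) := by
      rw [e1, ← habs1]; exact norm_auxF_le p _
    have n2 : ‖auxF p ((k:ℂ)*((t:ℂ)-1))‖ ≤ Real.exp (K*(1-t)) := by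
      rw [e2, ← habs2]; exact norm_auxF_le p _
    set A : ℝ := ‖c‖ with hA
    set B : ℝ := ‖b‖ with hB
    set P : ℝ := K^p with hP
    set x : ℝ := Real.exp (K*t) with hx
    set y : ℝ := Real.exp (K*(1-t)) with hy
    set u : ℝ := Real.exp (2*K*t - 2*K) with hu
    set v : ℝ := Real.exp (-(2*K*t)) with hv
    have hN : ‖(c * (k:ℂ)^p * auxF p ((k:ℂ)*(t:ℂ)) - b * (k:ℂ)^p * auxF p ((k:ℂ)*((t:ℂ)-1))) /
        Complex.sinh (k:ℂ)‖ ≤ (A*P*x + B*P*y) / Real.sinh K := by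
      rw [norm_div, hnormS, div_le_div_iff_of_pos_right hsinh_pos]
      calc ‖c * (k:ℂ)^p * auxF p ((k:ℂ)*(t:ℂ)) - b * (k:ℂ)^p * auxF p ((k:ℂ)*((t:ℂ)-1))‖
          ≤ ‖c * (k:ℂ)^p * auxF p ((k:ℂ)*(t:ℂ))‖ + ‖b * (k:ℂ)^p * auxF p ((k:ℂ)*((t:ℂ)-1))‖ :=
            norm_sub_le _ _
        _ = A*P*‖auxF p ((k:ℂ)*(t:ℂ))‖ + B*P*‖auxF p ((k:ℂ)*((t:ℂ)-1))‖ := by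
            rw [norm_mul, norm_mul, norm_mul, norm_mul, hkpow]
        _ ≤ A*P*x + B*P*y := by
            have hAP : (0:ℝ) ≤ A*P := by positivity
            have hBP : (0:ℝ) ≤ B*P := by positivity
            exact add_le_add (mul_le_mul_of_nonneg_left n1 hAP)
              (mul_le_mul_of_nonneg_left n2 hBP)
    have e1' : x^2 = u * (Real.exp K)^2 := by
      rw [hx, hu, sq, sq, ← Real.exp_add, ← Real.exp_add, ← Real.exp_add]
      congr 1; ring
    have e2' : y^2 = v * (Real.exp K)^2 := by
      rw [hy, hv, sq, sq, ← Real.exp_add, ← Real.exp_add, ← Real.exp_add]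
      congr 1; ring
    have step1 : (A*P*x + B*P*y)^2 ≤ 2*(P*A*x)^2 + 2*(P*B*y)^2 := by
      nlinarith [sq_nonneg (A*P*x - B*P*y)]
    have step2 : (P*A*x)^2 = P^2*A^2*(u*(Real.exp K)^2) := by
      rw [mul_pow, mul_pow, e1']
    have step3 : (P*B*y)^2 = P^2*B^2*(v*(Real.exp K)^2) := by
      rw [mul_pow, mul_pow, e2']
    have h16 : (Real.exp K)^2 ≤ 16*(Real.sinh K)^2 := by
      nlinarith [exp_le_four_sinh hK1, hsinh_pos, Real.exp_pos K]
    have step4 : 2*(P^2*A^2*(u*(Real.exp K)^2)) + 2*(P^2*B^2*(v*(Real.exp K)^2)) ≤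
        32*P^2*(A^2*u + B^2*v)*(Real.sinh K)^2 := by
      have hu0 : (0:ℝ) ≤ u := (Real.exp_pos _).le
      have hv0 : (0:ℝ) ≤ v := (Real.exp_pos _).le
      have i1 := mul_le_mul_of_nonneg_left h16 (show (0:ℝ) ≤ 2*P^2*A^2*u by positivity)
      have i2 := mul_le_mul_of_nonneg_left h16 (show (0:ℝ) ≤ 2*P^2*B^2*v by positivity)
      linarith [i1, i2]
    calc ‖(c * (k:ℂ)^p * auxF p ((k:ℂ)*(t:ℂ)) - b * (k:ℂ)^p * auxF p ((k:ℂ)*((t:ℂ)-1))) /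
          Complex.sinh (k:ℂ)‖^2
        ≤ ((A*P*x + B*P*y) / Real.sinh K)^2 := pow_le_pow_left₀ (norm_nonneg _) hN 2
      _ = (A*P*x + B*P*y)^2 / (Real.sinh K)^2 := div_pow _ _ _
      _ ≤ 32*P^2*(A^2*u + B^2*v) := by
          rw [div_le_iff₀ (pow_pos hsinh_pos 2)]
          linarith [step1, step2, step3, step4]
      _ = 32*K^(2*p)*(A^2*u + B^2*v) := by
          rw [hP, show 2*p = p*2 from mul_comm 2 p, pow_mul]
  -- integrability
  have hfc : Continuous (fun t : ℝ => ‖iteratedDeriv p (hsol k b c) t‖^2) := by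
    simp only [iteratedDeriv_hsol k b c p]
    have c1 : Continuous (fun t : ℝ => (k:ℂ) * (t:ℂ)) := by continuity
    have c2 : Continuous (fun t : ℝ => (k:ℂ) * ((t:ℂ) - 1)) := by continuity
    exact ((((continuous_const.mul ((continuous_auxF p).comp c1)).sub
      (continuous_const.mul ((continuous_auxF p).comp c2))).div_const _).norm).pow 2
  have hGc : Continuous (fun t : ℝ =>
      32 * K^(2*p) * (‖c‖^2 * Real.exp (2*K*t - 2*K) + ‖b‖^2 * Real.exp (-(2*K*t)))) := by
    continuity
  -- the two elementary integrals
  set J : ℝ := (1 - Real.exp (-(2*K)))/(2*K) with hJ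
  have h2K : (2*K) ≠ 0 := by positivity
  have I1 : (∫ t in (0:ℝ)..1, Real.exp (2*K*t - 2*K)) = J := by
    simp_rw [show ∀ t:ℝ, 2*K*t - 2*K = 2*K*t + -(2*K) from fun t => by ring]
    rw [integral_exp_affine (2*K) (-(2*K)) h2K,
      show 2*K + -(2*K) = (0:ℝ) by ring, Real.exp_zero, hJ]
  have I2 : (∫ t in (0:ℝ)..1, Real.exp (-(2*K*t))) = J := by
    simp_rw [show ∀ t:ℝ, -(2*K*t) = (-(2*K))*t + 0 from fun t => by ring]
    rw [integral_exp_affine (-(2*K)) 0 (neg_ne_zero.mpr h2K),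
      show -(2*K) + (0:ℝ) = -(2*K) by ring, Real.exp_zero, hJ]
    rw [div_eq_div_iff (neg_ne_zero.mpr h2K) h2K]
    ring
  -- put the integral bound together
  have hint1 : IntervalIntegrable (fun t : ℝ => ‖c‖^2 * Real.exp (2*K*t - 2*K))
      MeasureTheory.volume 0 1 := (by continuity : Continuous _).intervalIntegrable _ _
  have hint2 : IntervalIntegrable (fun t : ℝ => ‖b‖^2 * Real.exp (-(2*K*t)))
      MeasureTheory.volume 0 1 := (by continuity : Continuous _).intervalIntegrable _ _
  have hGint : (∫ t in (0:ℝ)..1,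
      32 * K^(2*p) * (‖c‖^2 * Real.exp (2*K*t - 2*K) + ‖b‖^2 * Real.exp (-(2*K*t))))
      = 32*K^(2*p)*(‖c‖^2 * J + ‖b‖^2 * J) := by
    rw [intervalIntegral.integral_const_mul, intervalIntegral.integral_add hint1 hint2,
      intervalIntegral.integral_const_mul, intervalIntegral.integral_const_mul, I1, I2]
  have hJ0 : 0 ≤ J := by
    have : Real.exp (-(2*K)) ≤ 1 := by
      rw [show (1:ℝ) = Real.exp 0 by simp]
      exact Real.exp_le_exp.2 (by linarith)
    exact div_nonneg (by linarith) (by positivity)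
  have hJle : J*(2*K) ≤ 1 := by
    rw [hJ, div_mul_eq_mul_div, mul_div_assoc, div_self h2K, mul_one]
    have := Real.exp_pos (-(2*K))
    linarith
  have hz : K ^ (2*(p:ℤ)-1) = K^(2*p)/K := by
    rw [zpow_sub₀ (ne_of_gt hKpos), zpow_one,
      show (2*(p:ℤ)) = ((2*p : ℕ) : ℤ) by push_cast; ring, zpow_natCast]
  calc (∫ t in (0:ℝ)..1, ‖iteratedDeriv p (hsol k b c) t‖^2)
      ≤ ∫ t in (0:ℝ)..1,
          32 * K^(2*p) * (‖c‖^2 * Real.exp (2*K*t - 2*K) + ‖b‖^2 * Real.exp (-(2*K*t))) :=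
        intervalIntegral.integral_mono_on (by norm_num)
          (hfc.intervalIntegrable _ _) (hGc.intervalIntegrable _ _) key
    _ = 32*K^(2*p)*(‖c‖^2 * J + ‖b‖^2 * J) := hGint
    _ ≤ 16 * K ^ (2*(p:ℤ)-1) * (‖b‖^2 + ‖c‖^2) := by
        rw [hz]
        have hfac : (0:ℝ) ≤ 16*K^(2*p)*(‖b‖^2+‖c‖^2) := by positivity
        have hmul := mul_le_mul_of_nonneg_left hJle hfac
        have h1 : 32*K^(2*p)*(‖c‖^2*J + ‖b‖^2*J) * K ≤ 16*K^(2*p)*(‖b‖^2+‖c‖^2) := by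
          nlinarith [hmul]
        calc 32*K^(2*p)*(‖c‖^2*J + ‖b‖^2*J)
            = (32*K^(2*p)*(‖c‖^2*J + ‖b‖^2*J) * K) / K := by field_simp
          _ ≤ (16*K^(2*p)*(‖b‖^2+‖c‖^2)) / K := by
              exact (div_le_div_iff_of_pos_right hKpos).mpr h1
          _ = 16*(K^(2*p)/K)*(‖b‖^2+‖c‖^2) := by ring
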